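/- arXiv:2501.07896 — 2 statements merged into one kernel-verified Lean document; each statement's English description precedes it below -/
import Mathlib

section
/- Correctness of the HS-lb termination condition: if K is a set of cores, h is a minimum-cost vector hitting K, and h is a solution vector, then the cost of h equals w*, the optimal feasible assignment cost. -/
/-- Correctness of HS-lb termination: a minimum-cost hitting vector of a set of cores
which is itself a solution vector has cost exactly `w*`. -/
theorem hs_lb_termination {A : Type*} (C : Set A) (m : ℕ) (f : Fin m → A → ℕ)
    (astar : A) (hastar : astar ∈ C)
    (hopt : ∀ a ∈ C, ∑ i, f i astar ≤ ∑ i, f i a)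
    (K : Set (Fin m → ℕ))
    (hK : ∀ k ∈ K, ¬ ∃ a ∈ C, ∀ i, f i a ≤ k i)
    (h : Fin m → ℕ)
    (hhits : ∀ k ∈ K, ¬ h ≤ k)
    (hmin : ∀ h' : Fin m → ℕ, (∀ k ∈ K, ¬ h' ≤ k) → ∑ i, h i ≤ ∑ i, h' i)
    (hsol : ∃ a ∈ C, ∀ i, f i a ≤ h i) :
    ∑ i, h i = ∑ i, f i astar := by
  apply le_antisymm
  · exact hmin (fun i => f i astar) (fun k hk hle => hK k hk ⟨astar, hastar, fun i => hle i⟩)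
  · obtain ⟨a, haC, hfa⟩ := hsol
    calc ∑ i, f i astar ≤ ∑ i, f i a := hopt a haC
      _ ≤ ∑ i, h i := Finset.sum_le_sum fun i _ => hfa i
end

section
/- Correctness of the HS-ub termination condition: if K is a set of cores, ub is the cost of some solution vector, and every vector hitting K has cost ≥ ub, then ub = w*. -/
/-- Correctness of HS-ub termination: if `ub` is the cost of a solution vector and every
vector hitting the core set `K` has cost at least `ub`, then `ub = w*`. -/
theorem hs_ub_termination {A : Type*} (C : Set A) (m : ℕ) (f : Fin m → A → ℕ)
    (astar : A) (hastar : astar ∈ C)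
    (hopt : ∀ a ∈ C, ∑ i, f i astar ≤ ∑ i, f i a)
    (K : Set (Fin m → ℕ))
    (hK : ∀ k ∈ K, ¬ ∃ a ∈ C, ∀ i, f i a ≤ k i)
    (ub : ℕ) (v : Fin m → ℕ)
    (hv : ∃ a ∈ C, ∀ i, f i a ≤ v i) (hvcost : ∑ i, v i = ub)
    (hnohit : ∀ h : Fin m → ℕ, (∀ k ∈ K, ¬ h ≤ k) → ub ≤ ∑ i, h i) :
    ub = ∑ i, f i astar := by
  apply le_antisymm
  · exact hnohit (fun i => f i astar) (fun k hk hle =>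
      hK k hk ⟨astar, hastar, fun i => hle i⟩)
  · obtain ⟨a, ha, hle⟩ := hv
    calc ∑ i, f i astar ≤ ∑ i, f i a := hopt a ha
      _ ≤ ∑ i, v i := Finset.sum_le_sum (fun i _ => hle i)
      _ = ub := hvcost
end
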